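/- arXiv:1201.5534 — 2 statements merged into one kernel-verified Lean document; each statement's English description precedes it below -/
import Mathlib

section
/- Let x be a positive real number and d₁, …, dₙ real numbers such that dᵢ > -x for each i and ∑ dᵢ = 0. If the dᵢ are not all zero, then ∏ᵢ (x + dᵢ) < xⁿ. -/
open Real Finset in
theorem stmt1 (n : ℕ) (x : ℝ) (hx : 0 < x) (d : Fin n → ℝ)
    (hd : ∀ i, -x < d i) (hsum : ∑ i, d i = 0) (hne : ∃ i, d i ≠ 0) :
    ∏ i, (x + d i) < x ^ n := by
  obtain ⟨i, hi⟩ := hne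
  have hn : 0 < n := Fin.pos i
  have hpos : ∀ j, 0 < x + d j := fun j => by linarith [hd j]
  -- exists j with d j ≠ d i
  have hj : ∃ j, d j ≠ d i := by
    by_contra h
    push_neg at h
    have : ∑ k, d k = n * d i := by
      rw [Finset.sum_congr rfl fun k _ => h k]
      simp [mul_comm]
    rw [hsum] at this
    have : d i = 0 := by
      have hn' : (n:ℝ) ≠ 0 := Nat.cast_ne_zero.2 hn.ne'
      rcases mul_eq_zero.mp this.symm with h0 | h0
      · exact absurd (Nat.cast_eq_zero.mp h0) hn.ne'
      · exact h0
    exact hi this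
  obtain ⟨j, hj⟩ := hj
  have key := strictConcaveOn_log_Ioi.lt_map_sum (t := Finset.univ)
    (w := fun _ : Fin n => (n : ℝ)⁻¹) (p := fun k => x + d k)
    (fun k _ => by positivity)
    (by simp [Finset.card_univ]; field_simp)
    (fun k _ => hpos k)
    ⟨i, Finset.mem_univ i, j, Finset.mem_univ j, by simpa using fun h => hj (by linarith)⟩
  have hsum2 : ∑ k : Fin n, (n:ℝ)⁻¹ • (x + d k) = x := by
    rw [← Finset.smul_sum, Finset.sum_add_distrib, hsum]
    simp [Finset.card_univ]
    field_simp
  rw [hsum2] at key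
  have key2 : ∑ k : Fin n, log (x + d k) < n * log x := by
    have := mul_lt_mul_of_pos_left key (by positivity : (0:ℝ) < (n:ℝ))
    rw [Finset.mul_sum] at this
    calc ∑ k : Fin n, log (x + d k) = ∑ k : Fin n, (n:ℝ) * ((n:ℝ)⁻¹ • log (x + d k)) := by
          congr 1; ext k; rw [smul_eq_mul, ← mul_assoc, mul_inv_cancel₀ (Nat.cast_ne_zero.2 hn.ne'), one_mul]
      _ < (n:ℝ) * log x := this
  have := Real.exp_lt_exp.2 key2
  rwa [Real.exp_sum, Real.exp_nat_mul,
    Real.exp_log hx,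
    Finset.prod_congr rfl (fun k _ => (Real.exp_log (hpos k)))] at this
end

section
/- Let x > 0 and d₁, …, dₙ real numbers with dᵢ > -x for each i and ∑ dᵢ = 0. Then ∏ᵢ (x + dᵢ) = xⁿ if and only if all dᵢ = 0. -/
open Finset in
theorem stmt2 (n : ℕ) (x : ℝ) (hx : 0 < x) (d : Fin n → ℝ)
    (hd : ∀ i, -x < d i) (hsum : ∑ i, d i = 0) :
    ∏ i, (x + d i) = x ^ n ↔ ∀ i, d i = 0 := by
  have hpos : ∀ i, 0 < x + d i := fun i => by linarith [hd i]
  constructor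
  · intro hprod
    by_contra h
    push_neg at h
    obtain ⟨j, hj⟩ := h
    have hn : 0 < n := j.pos
    have hn' : (0:ℝ) < n := by exact_mod_cast hn
    have hk : ∃ k, d k ≠ d j := by
      by_contra hk
      push_neg at hk
      have : ∑ i, d i = n * d j := by
        rw [Finset.sum_congr rfl fun i _ => hk i]
        simp [Finset.sum_const, mul_comm]
      rw [hsum] at this
      have := (mul_eq_zero.mp this.symm).resolve_left (by positivity)
      exact hj this
    obtain ⟨k, hk⟩ := hk
    have hjensen := strictConcaveOn_log_Ioi.lt_map_sum (𝕜 := ℝ)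
      (t := Finset.univ) (w := fun _ : Fin n => 1 / (n:ℝ)) (p := fun i => x + d i)
      (fun i _ => by positivity) (by simp; field_simp)
      (fun i _ => hpos i) ⟨j, mem_univ j, k, mem_univ k, by intro hc; apply hk; linarith⟩
    have hsum2 : ∑ i, (1/(n:ℝ)) • (x + d i) = x := by
      rw [← Finset.smul_sum, Finset.sum_add_distrib, hsum]
      simp [Finset.sum_const, smul_eq_mul]
      field_simp
    rw [hsum2, ← Finset.smul_sum] at hjensen
    have hlt : ∑ i, Real.log (x + d i) < n * Real.log x := by
      rw [smul_eq_mul] at hjensen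
      have := mul_lt_mul_of_pos_left hjensen hn'
      rw [← mul_assoc] at this
      field_simp at this
      linarith
    have hlog : Real.log (∏ i, (x + d i)) = ∑ i, Real.log (x + d i) :=
      Real.log_prod (fun i _ => (hpos i).ne')
    rw [hprod, Real.log_pow] at hlog
    rw [hlog] at hlt
    exact lt_irrefl _ hlt
  · intro h
    simp [h]
end
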